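/- Let 0 < θ < 1, p > 0, T = θ^(2^p), and x > 0. For all t ∈ [0,1], with u = 1 − t, one has 0 ≤ x²t/(x²t + T·u) − T·x²t/(T·x²t + u) ≤ (1 − T)/(1 + T), with equality on the right attained at t = 1/(1 + x²). -/

import Mathlib

lemma stmt_18_aux (T a u : ℝ) (hT0 : 0 < T) (hT1 : T < 1) (ha : 0 ≤ a) (hu : 0 ≤ u)
    (h1 : 0 < a + T * u) (h2 : 0 < T * a + u) :
    0 ≤ a / (a + T * u) - T * a / (T * a + u) ∧
      a / (a + T * u) - T * a / (T * a + u) ≤ (1 - T) / (1 + T) := by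
  rw [div_sub_div _ _ h1.ne' h2.ne']
  constructor
  · apply div_nonneg _ (mul_pos h1 h2).le
    nlinarith [mul_nonneg (mul_nonneg ha hu) (by nlinarith : (0:ℝ) ≤ 1 - T ^ 2)]
  · rw [div_le_div_iff₀ (mul_pos h1 h2) (by linarith : (0:ℝ) < 1 + T)]
    nlinarith [mul_nonneg (mul_nonneg (sub_nonneg.2 hT1.le) hT0.le) (sq_nonneg (a - u))]

/-- for 0 < θ < 1, p > 0, T = θ^(2^p), x > 0 and t ∈ [0,1] (u = 1 − t),
0 ≤ x²t/(x²t + T·u) − T·x²t/(T·x²t + u) ≤ (1−T)/(1+T), with equality on the right at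
t = 1/(1 + x²). -/
theorem stmt_18 (θ p T x : ℝ) (hθ0 : 0 < θ) (hθ1 : θ < 1) (hp : 0 < p)
    (hT : T = θ ^ ((2 : ℝ) ^ p)) (hx : 0 < x) :
    (∀ t : ℝ, 0 ≤ t → t ≤ 1 →
      0 ≤ x ^ 2 * t / (x ^ 2 * t + T * (1 - t)) -
          T * x ^ 2 * t / (T * x ^ 2 * t + (1 - t)) ∧
      x ^ 2 * t / (x ^ 2 * t + T * (1 - t)) -
          T * x ^ 2 * t / (T * x ^ 2 * t + (1 - t)) ≤ (1 - T) / (1 + T)) ∧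
    x ^ 2 * (1 / (1 + x ^ 2)) / (x ^ 2 * (1 / (1 + x ^ 2)) + T * (1 - 1 / (1 + x ^ 2))) -
        T * x ^ 2 * (1 / (1 + x ^ 2)) / (T * x ^ 2 * (1 / (1 + x ^ 2)) + (1 - 1 / (1 + x ^ 2)))
      = (1 - T) / (1 + T) := by
  have hT0 : 0 < T := hT ▸ Real.rpow_pos_of_pos hθ0 _
  have hT1 : T < 1 := by
    rw [hT]
    exact Real.rpow_lt_one hθ0.le hθ1 (by positivity)
  constructor
  · intro t ht0 ht1
    have ha : 0 ≤ x ^ 2 * t := by positivity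
    have hu : 0 ≤ 1 - t := by linarith
    have h1 : 0 < x ^ 2 * t + T * (1 - t) := by
      rcases eq_or_lt_of_le ht0 with h | h
      · rw [← h]; nlinarith
      · nlinarith [mul_nonneg hT0.le hu, mul_pos (pow_pos hx 2) h]
    have h2 : 0 < T * (x ^ 2 * t) + (1 - t) := by
      rcases eq_or_lt_of_le ht1 with h | h
      · rw [h]; nlinarith [pow_pos hx 2]
      · nlinarith [mul_nonneg hT0.le ha]
    have := stmt_18_aux T (x ^ 2 * t) (1 - t) hT0 hT1 ha hu h1 h2
    simpa [mul_assoc] using this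
  · have hx2 : (0:ℝ) < 1 + x ^ 2 := by positivity
    have key : (1:ℝ) - 1 / (1 + x ^ 2) = x ^ 2 / (1 + x ^ 2) := by
      field_simp
      ring
    rw [key]
    have ha : x ^ 2 * (1 / (1 + x ^ 2)) = x ^ 2 / (1 + x ^ 2) := by ring
    rw [ha]
    set a := x ^ 2 / (1 + x ^ 2) with hadef
    have hap : 0 < a := by positivity
    have hTp : (0:ℝ) < 1 + T := by linarith
    rw [show a + T * a = a * (1 + T) by ring, show T * x ^ 2 * (1 / (1 + x ^ 2)) = T * a by
      rw [hadef]; ring, show T * a + a = a * (1 + T) by ring]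
    rw [div_sub_div_same, div_eq_div_iff (by positivity) hTp.ne']
    ring
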